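/- If AW = 0 and the identity A∘φ∘A = c·φ holds (the Hopf identity with Hopf principal curvature α = 0), then for every X ∈ E orthogonal to W one has (φ∘A)²X = −cX and S*X = (2n+1)c·X, and consequently trace S* = 2(n−1)(2n+1)c. In particular the *-Einstein condition ⟨S*X,Y⟩ = (ρ*/(2(n−1)))⟨X,Y⟩ for X,Y ∈ W^⊥ holds with ρ* = trace S*. -/

import Mathlib

open scoped InnerProductSpace

/-- if AW = 0 and A∘φ∘A = cφ (the Hopf identity with α = 0), then for
X ⊥ W one has (φ∘A)²X = −cX and S*X = (2n+1)c·X, trace S* = 2(n−1)(2n+1)c, and the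
*-Einstein condition holds with ρ* = trace S*. -/
theorem hopf_alpha_zero_star_einstein
    {n : ℕ} (hn : 2 ≤ n)
    {E : Type*} [NormedAddCommGroup E] [InnerProductSpace ℝ E] [FiniteDimensional ℝ E]
    (hdim : Module.finrank ℝ E = 2 * n - 1)
    (W : E) (hW : ‖W‖ = 1)
    (φ : E →ₗ[ℝ] E) (hφskew : ∀ x y : E, ⟪φ x, y⟫_ℝ = - ⟪x, φ y⟫_ℝ)
    (hφW : φ W = 0) (hφφ : ∀ X : E, φ (φ X) = -X + ⟪X, W⟫_ℝ • W)
    (c : ℝ) (hc : c ≠ 0)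
    (A : E →ₗ[ℝ] E) (hA : ∀ x y : E, ⟪A x, y⟫_ℝ = ⟪x, A y⟫_ℝ)
    (hAW : A W = 0)
    (hHopf : A ∘ₗ φ ∘ₗ A = c • φ)
    (Sstar : E →ₗ[ℝ] E)
    (hS : Sstar = -((2 * (n : ℝ) * c) • (φ ∘ₗ φ) + (φ ∘ₗ A) ∘ₗ (φ ∘ₗ A))) :
    (∀ X : E, ⟪X, W⟫_ℝ = 0 →
        ((φ ∘ₗ A) ∘ₗ (φ ∘ₗ A)) X = (-c) • X ∧ Sstar X = ((2 * (n : ℝ) + 1) * c) • X) ∧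
    LinearMap.trace ℝ E Sstar = 2 * ((n : ℝ) - 1) * (2 * (n : ℝ) + 1) * c ∧
    (∀ X Y : E, ⟪X, W⟫_ℝ = 0 → ⟪Y, W⟫_ℝ = 0 →
        ⟪Sstar X, Y⟫_ℝ = (LinearMap.trace ℝ E Sstar / (2 * ((n : ℝ) - 1))) * ⟪X, Y⟫_ℝ) := by
  -- key computation: (φA)² X = c • φ(φ X)
  have hsq : ∀ X : E, ((φ ∘ₗ A) ∘ₗ (φ ∘ₗ A)) X = c • (-X + ⟪X, W⟫_ℝ • W) := by
    intro X
    have h1 : A (φ (A X)) = c • φ X := by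
      have := LinearMap.congr_fun hHopf X
      simpa using this
    have : ((φ ∘ₗ A) ∘ₗ (φ ∘ₗ A)) X = φ (A (φ (A X))) := rfl
    rw [this, h1, map_smul, hφφ]
  have hSX : ∀ X : E, Sstar X
      = ((2 * (n : ℝ) + 1) * c) • X - (((2 * (n : ℝ) + 1) * c) * ⟪X, W⟫_ℝ) • W := by
    intro X
    rw [hS]
    simp only [LinearMap.neg_apply, LinearMap.add_apply, LinearMap.smul_apply,
      LinearMap.comp_apply]
    rw [show φ (φ X) = -X + ⟪X, W⟫_ℝ • W from hφφ X,
      show φ (A (φ (A X))) = c • (-X + ⟪X, W⟫_ℝ • W) from hsq X]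
    simp only [smul_add, smul_neg, smul_smul]
    module
  have htrace : LinearMap.trace ℝ E Sstar = 2 * ((n : ℝ) - 1) * (2 * (n : ℝ) + 1) * c := by
    set Q : E →ₗ[ℝ] E :=
      (LinearMap.toSpanSingleton ℝ E W) ∘ₗ ((innerSL ℝ W : E →L[ℝ] ℝ) : E →ₗ[ℝ] ℝ) with hQ
    have hSeq : Sstar = ((2 * (n : ℝ) + 1) * c) • (LinearMap.id - Q) := by
      ext X
      rw [hSX X]
      simp only [LinearMap.smul_apply, LinearMap.sub_apply, LinearMap.id_apply, hQ,
        LinearMap.comp_apply, LinearMap.toSpanSingleton_apply, ContinuousLinearMap.coe_coe,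
        innerSL_apply_apply, real_inner_comm W X]
      rw [smul_sub, smul_smul]
    have hWW : ⟪W, W⟫_ℝ = 1 := by
      rw [real_inner_self_eq_norm_sq, hW]; norm_num
    have htrQ : LinearMap.trace ℝ E Q = 1 := by
      rw [hQ, LinearMap.trace_comp_comm']
      have : (((innerSL ℝ W : E →L[ℝ] ℝ) : E →ₗ[ℝ] ℝ) ∘ₗ LinearMap.toSpanSingleton ℝ E W)
          = LinearMap.id := by
        ext r
        simp [LinearMap.toSpanSingleton, hWW, hW]
      rw [this, LinearMap.trace_id]
      simp
    have htr : LinearMap.trace ℝ E Sstar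
        = ((2 * (n : ℝ) + 1) * c) * ((2 * (n : ℝ) - 1) - 1) := by
      rw [hSeq, map_smul, map_sub, LinearMap.trace_id, htrQ, hdim]
      have : ((2 * n - 1 : ℕ) : ℝ) = 2 * (n : ℝ) - 1 := by
        have : 1 ≤ 2 * n := by omega
        push_cast [Nat.cast_sub this]
        ring
      rw [this]
      simp
    rw [htr]; ring
  refine ⟨?_, htrace, ?_⟩
  · intro X hX
    constructor
    · rw [hsq X, hX]; simp [neg_smul]
    · rw [hSX X, hX]; simp
  · intro X Y hX hY
    have hne : (2 * ((n : ℝ) - 1)) ≠ 0 := by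
      have : (2 : ℝ) ≤ (n : ℝ) := by exact_mod_cast hn
      intro h; nlinarith
    have hSXv : Sstar X = ((2 * (n : ℝ) + 1) * c) • X := by
      rw [hSX X, hX]; simp
    rw [hSXv]
    rw [htrace, real_inner_smul_left]
    have hne1 : ((n : ℝ) - 1) ≠ 0 := fun h => hne (by rw [h]; ring)
    field_simp
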